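/- If n ≡ 2 (mod 4), then mp(K_n) = n/2. -/

import Mathlib

open Finset

lemma even_card_of_pairing {α : Type} [DecidableEq α] (s : Finset α) (f : α → α)
    (hf : ∀ x ∈ s, f x ∈ s ∧ f (f x) = x ∧ f x ≠ x) : Even s.card := by
  induction s using Finset.strongInduction with
  | _ s ih =>
    rcases s.eq_empty_or_nonempty with rfl | ⟨x, hx⟩
    · simp
    · obtain ⟨hfx₁, hfx₂, hfx₃⟩ := hf x hx
      set t := (s.erase x).erase (f x) with ht
      have hfxe : f x ∈ s.erase x := Finset.mem_erase.2 ⟨hfx₃, hfx₁⟩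
      have htsub : t ⊂ s := by
        refine Finset.ssubset_of_subset_of_ssubset ?_ (Finset.erase_ssubset hx)
        exact Finset.erase_subset _ _
      have htcard : t.card + 2 = s.card := by
        have h1 : (s.erase x).card + 1 = s.card := Finset.card_erase_add_one hx
        have h2 : t.card + 1 = (s.erase x).card := Finset.card_erase_add_one hfxe
        omega
      have hgood : ∀ z ∈ t, f z ∈ t ∧ f (f z) = z ∧ f z ≠ z := by
        intro z hz
        have hz' : z ∈ s := htsub.1 hz
        obtain ⟨h1, h2, h3⟩ := hf z hz'
        have hzx : z ≠ x := (Finset.mem_erase.1 (Finset.mem_erase.1 hz).2).1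
        have hzfx : z ≠ f x := (Finset.mem_erase.1 hz).1
        refine ⟨?_, h2, h3⟩
        rw [ht, Finset.mem_erase, Finset.mem_erase]
        refine ⟨?_, ?_, h1⟩
        · intro h; apply hzx; rw [← h2, h, hfx₂]
        · intro h; apply hzfx; rw [← h2, h]
      obtain ⟨a, ha⟩ := ih t htsub hgood
      exact ⟨a + 1, by omega⟩

section MinDegree

variable {n : ℕ} (H : SimpleGraph (Fin n))

/-- `f` is a partial perfect matching of `H` covering exactly `s`. -/
def GoodMatch (s : Finset (Fin n)) (f : Fin n → Fin n) : Prop :=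
  ∀ x ∈ s, f x ∈ s ∧ f (f x) = x ∧ f x ≠ x ∧ H.Adj x (f x)

lemma goodMatch_extend {s : Finset (Fin n)} {f : Fin n → Fin n}
    (hG : GoodMatch H s f) {u v : Fin n} (hu : u ∉ s) (hv : v ∉ s) (huv : H.Adj u v) :
    GoodMatch H (insert u (insert v s))
      (Function.update (Function.update f u v) v u) := by
  have hne : u ≠ v := huv.ne
  set f' := Function.update (Function.update f u v) v u with hf'
  have eu : f' u = v := by simp [hf', Function.update_of_ne hne, Function.update_self]
  have ev : f' v = u := by simp [hf', Function.update_self]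
  intro z hz
  rcases Finset.mem_insert.1 hz with rfl | hz
  · refine ⟨by simp [eu], by rw [eu, ev], by rw [eu]; exact hne.symm, by rw [eu]; exact huv⟩
  rcases Finset.mem_insert.1 hz with rfl | hz
  · refine ⟨by simp [ev], by rw [ev, eu], by rw [ev]; exact hne, by rw [ev]; exact huv.symm⟩
  · obtain ⟨h1, h2, h3, h4⟩ := hG z hz
    have hzu : z ≠ u := fun h => hu (h ▸ hz)
    have hzv : z ≠ v := fun h => hv (h ▸ hz)
    have hfzu : f z ≠ u := fun h => hu (h ▸ h1)
    have hfzv : f z ≠ v := fun h => hv (h ▸ h1)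
    have ez : f' z = f z := by
      simp [hf', Function.update_of_ne hzv, Function.update_of_ne hzu]
    have ezf : f' (f z) = f (f z) := by
      simp [hf', Function.update_of_ne hfzv, Function.update_of_ne hfzu]
    refine ⟨by rw [ez]; simp [h1], by rw [ez, ezf, h2], by rw [ez]; exact h3, by rw [ez]; exact h4⟩

end MinDegree

section MinDegree2

variable {n : ℕ} (H : SimpleGraph (Fin n)) [DecidableRel H.Adj]

lemma goodMatch_step (hn : Even n) (hdeg : ∀ v, n / 2 ≤ H.degree v)
    {s : Finset (Fin n)} {f : Fin n → Fin n} (hG : GoodMatch H s f) (hs : s ≠ Finset.univ) :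
    ∃ s' f', GoodMatch H s' f' ∧ s'.card = s.card + 2 := by
  have hev : Even s.card :=
    even_card_of_pairing s f (fun x hx => ⟨(hG x hx).1, (hG x hx).2.1, (hG x hx).2.2.1⟩)
  have hlt : s.card < n := by
    have := Finset.card_lt_card (Finset.ssubset_univ_iff.2 hs)
    simpa using this
  have hle : s.card + 2 ≤ n := by
    obtain ⟨a, ha⟩ := hev; obtain ⟨b, hb⟩ := hn; omega
  -- find two distinct vertices outside s
  have hcompl : 2 ≤ sᶜ.card := by
    rw [Finset.card_compl]
    simp only [Fintype.card_fin]
    omega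
  obtain ⟨u, hu, v, hv, hne⟩ := Finset.one_lt_card.1 (by omega : 1 < sᶜ.card)
  rw [Finset.mem_compl] at hu hv
  by_cases hA : ∃ a b, a ∉ s ∧ b ∉ s ∧ H.Adj a b
  · obtain ⟨a, b, ha, hb, hab⟩ := hA
    refine ⟨insert a (insert b s), _, goodMatch_extend H hG ha hb hab, ?_⟩
    rw [Finset.card_insert_of_notMem, Finset.card_insert_of_notMem hb]
    simp [Finset.mem_insert, hab.ne, ha]
  · push_neg at hA
    -- all neighbours of u and v lie in s
    have hNu : H.neighborFinset u ⊆ s := by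
      intro w hw
      rw [SimpleGraph.mem_neighborFinset] at hw
      by_contra hws
      exact hA u w hu hws hw
    have hNv : H.neighborFinset v ⊆ s := by
      intro w hw
      rw [SimpleGraph.mem_neighborFinset] at hw
      by_contra hws
      exact hA v w hv hws hw
    -- counting
    have hfil : ∀ w : Fin n, H.neighborFinset w ⊆ s →
        s.filter (fun x => H.Adj w x) = H.neighborFinset w := by
      intro w hw
      ext z
      simp only [Finset.mem_filter, SimpleGraph.mem_neighborFinset]
      exact ⟨fun h => h.2, fun h => ⟨hw (by rw [SimpleGraph.mem_neighborFinset]; exact h), h⟩⟩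
    have sum1 : ∑ x ∈ s, (if H.Adj u x then 1 else 0) = H.degree u := by
      rw [SimpleGraph.degree, ← hfil u hNu, Finset.card_filter]
    have hsinv : ∀ x ∈ s, f x ∈ s := fun x hx => (hG x hx).1
    have hfinv : ∀ x ∈ s, f (f x) = x := fun x hx => (hG x hx).2.1
    have sum2 : ∑ x ∈ s, (if H.Adj v (f x) then 1 else 0) = H.degree v := by
      rw [SimpleGraph.degree, ← hfil v hNv, Finset.card_filter]
      exact Finset.sum_nbij' f f hsinv hsinv hfinv hfinv (fun a _ => rfl)
    have total : (n : ℕ) ≤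
        ∑ x ∈ s, ((if H.Adj u x then 1 else 0) + (if H.Adj v (f x) then 1 else 0)) := by
      rw [Finset.sum_add_distrib, sum1, sum2]
      have h1 := hdeg u
      have h2 := hdeg v
      obtain ⟨b, hb⟩ := hn
      omega
    have hkey : ∃ x ∈ s, H.Adj u x ∧ H.Adj v (f x) := by
      have hlt2 : ∑ x ∈ s, (1 : ℕ) <
          ∑ x ∈ s, ((if H.Adj u x then 1 else 0) + (if H.Adj v (f x) then 1 else 0)) := by
        rw [Finset.sum_const, smul_eq_mul, mul_one]
        omega
      obtain ⟨x, hx, hx2⟩ := Finset.exists_lt_of_sum_lt hlt2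
      by_cases h1 : H.Adj u x
      · by_cases h2 : H.Adj v (f x)
        · exact ⟨x, hx, h1, h2⟩
        · simp [h1, h2] at hx2
      · by_cases h2 : H.Adj v (f x)
        · simp [h1, h2] at hx2
        · simp [h1, h2] at hx2
    obtain ⟨x, hxs, hux, hvy⟩ := hkey
    set y := f x with hy
    obtain ⟨hys, hffx, hfxne, hAdjxy⟩ := hG x hxs
    rw [← hy] at hys hffx hfxne hAdjxy
    have hxy : x ≠ y := fun h => hfxne (h.symm)
    have hux' : u ≠ x := fun h => hu (h ▸ hxs)
    have huy' : u ≠ y := fun h => hu (h ▸ hys)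
    have hvx' : v ≠ x := fun h => hv (h ▸ hxs)
    have hvy' : v ≠ y := fun h => hv (h ▸ hys)
    set f' : Fin n → Fin n := fun z =>
      if z = u then x else if z = v then y else if z = x then u else if z = y then v else f z
      with hf'
    have eu : f' u = x := by simp [hf']
    have ev : f' v = y := by simp [hf', hne.symm]
    have ex : f' x = u := by simp [hf', hux'.symm, hvx'.symm]
    have ey : f' y = v := by simp [hf', huy'.symm, hvy'.symm, hxy.symm]
    refine ⟨insert u (insert v s), f', ?_, ?_⟩
    · intro z hz
      rcases Finset.mem_insert.1 hz with rfl | hz'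
      · exact ⟨by simp [eu, Finset.mem_insert, hxs], by rw [eu, ex], by rw [eu]; exact hux'.symm,
          by rw [eu]; exact hux⟩
      rcases Finset.mem_insert.1 hz' with rfl | hz''
      · exact ⟨by simp [ev, Finset.mem_insert, hys], by rw [ev, ey], by rw [ev]; exact hvy'.symm,
          by rw [ev]; exact hvy⟩
      · have hzu : z ≠ u := fun h => hu (h ▸ hz'')
        have hzv : z ≠ v := fun h => hv (h ▸ hz'')
        by_cases hzx : z = x
        · subst hzx
          exact ⟨by simp [ex, Finset.mem_insert], by rw [ex, eu], by rw [ex]; exact hux',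
            by rw [ex]; exact hux.symm⟩
        by_cases hzy : z = y
        · subst hzy
          exact ⟨by simp [ey, Finset.mem_insert], by rw [ey, ev], by rw [ey]; exact hvy',
            by rw [ey]; exact hvy.symm⟩
        · obtain ⟨h1, h2, h3, h4⟩ := hG z hz''
          have hfzu : f z ≠ u := fun h => hu (h ▸ h1)
          have hfzv : f z ≠ v := fun h => hv (h ▸ h1)
          have hfzx : f z ≠ x := by
            intro h
            apply hzy
            rw [hy, ← h, h2]
          have hfzy : f z ≠ y := by
            intro h
            apply hzx
            rw [← hffx, ← h, h2]
          have ez : f' z = f z := by simp [hf', hzu, hzv, hzx, hzy]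
          have ezf : f' (f z) = f (f z) := by simp [hf', hfzu, hfzv, hfzx, hfzy]
          exact ⟨by rw [ez]; simp [Finset.mem_insert, h1], by rw [ez, ezf, h2],
            by rw [ez]; exact h3, by rw [ez]; exact h4⟩
    · rw [Finset.card_insert_of_notMem, Finset.card_insert_of_notMem hv]
      simp [Finset.mem_insert, hne, hu]

lemma exists_pm_of_min_degree (hn : Even n) (hdeg : ∀ v, n / 2 ≤ H.degree v) :
    ∃ M : H.Subgraph, M.IsPerfectMatching := by
  have main : ∀ k (s : Finset (Fin n)) (f : Fin n → Fin n),
      GoodMatch H s f → n ≤ s.card + k → ∃ g, GoodMatch H Finset.univ g := by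
    intro k
    induction k with
    | zero =>
      intro s f hG hcard
      have : s = Finset.univ := Finset.eq_univ_of_card s
        (le_antisymm (by simpa using s.card_le_univ) (by simpa using hcard))
      exact ⟨f, this ▸ hG⟩
    | succ k ih =>
      intro s f hG hcard
      by_cases hs : s = Finset.univ
      · exact ⟨f, hs ▸ hG⟩
      · obtain ⟨s', f', hG', hc⟩ := goodMatch_step H hn hdeg hG hs
        exact ih s' f' hG' (by omega)
  obtain ⟨g, hg⟩ := main n ∅ id (fun x hx => by simp at hx) (by simp)
  refine ⟨⟨Set.univ, fun a b => H.Adj a b ∧ g a = b, fun h => h.1, fun _ => Set.mem_univ _, ?_⟩, ?_⟩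
  · constructor
    rintro a b ⟨hab, rfl⟩
    exact ⟨hab.symm, (hg a (Finset.mem_univ a)).2.1⟩
  · rw [SimpleGraph.Subgraph.isPerfectMatching_iff]
    intro v
    exact ⟨g v, ⟨(hg v (Finset.mem_univ v)).2.2.2, rfl⟩, fun w hw => hw.2.symm⟩

end MinDegree2

lemma lb_delete_pm {n : ℕ} (hn2 : Even n) (𝓜 : Finset (⊤ : SimpleGraph (Fin n)).Subgraph)
    (hpm : ∀ M ∈ 𝓜, M.IsPerfectMatching) (hcard : 𝓜.card < n / 2) :
    ∃ M' : ((⊤ : SimpleGraph (Fin n)).deleteEdges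
      (⋃ M ∈ 𝓜, SimpleGraph.Subgraph.edgeSet M)).Subgraph, M'.IsPerfectMatching := by
  classical
  set E := ⋃ M ∈ 𝓜, SimpleGraph.Subgraph.edgeSet M with hE
  set H := (⊤ : SimpleGraph (Fin n)).deleteEdges E with hH
  apply exists_pm_of_min_degree H hn2
  intro v
  set R := Finset.univ.filter (fun w : Fin n => v ≠ w ∧ s(v, w) ∈ E) with hR
  have hRcard : R.card ≤ 𝓜.card := by
    set F : Fin n → (⊤ : SimpleGraph (Fin n)).Subgraph := fun w =>
      if h : ∃ M, M ∈ 𝓜 ∧ M.Adj v w then h.choose else ⊥ with hF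
    have hex : ∀ w ∈ R, ∃ M, M ∈ 𝓜 ∧ M.Adj v w := by
      intro w hw
      rw [hR, Finset.mem_filter] at hw
      obtain ⟨-, -, hmem⟩ := hw
      rw [hE] at hmem
      simp only [Set.mem_iUnion] at hmem
      obtain ⟨M, hM, he⟩ := hmem
      exact ⟨M, hM, SimpleGraph.Subgraph.mem_edgeSet.1 he⟩
    apply Finset.card_le_card_of_injOn F
    · intro w hw
      have h := hex w hw
      rw [hF]
      simp only [dif_pos h]
      exact h.choose_spec.1
    · intro w hw w' hw' heq
      have h := hex w hw
      have h' := hex w' hw'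
      rw [hF] at heq
      simp only [dif_pos h, dif_pos h'] at heq
      have h1 : h.choose.Adj v w := h.choose_spec.2
      have h2 : h.choose.Adj v w' := heq ▸ h'.choose_spec.2
      obtain ⟨_, ⟨_, hu⟩⟩ := (SimpleGraph.Subgraph.isPerfectMatching_iff.1
        (hpm _ h.choose_spec.1)) v
      rw [hu w h1, hu w' h2]
  have hNv : H.neighborFinset v = Finset.univ.filter (fun w => H.Adj v w) := by
    ext w
    simp [SimpleGraph.mem_neighborFinset]
  have hcover : (Finset.univ : Finset (Fin n)) ⊆
      (Finset.univ.filter (fun w => H.Adj v w)) ∪ R ∪ {v} := by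
    intro w _
    by_cases hwv : w = v
    · simp [hwv]
    · by_cases hme : s(v, w) ∈ E
      · simp only [Finset.mem_union, Finset.mem_filter, Finset.mem_univ, true_and, hR]
        exact Or.inl (Or.inr ⟨fun h => hwv h.symm, hme⟩)
      · have : H.Adj v w := by
          rw [hH, SimpleGraph.deleteEdges_adj]
          exact ⟨SimpleGraph.top_adj v w |>.2 (fun h => hwv h.symm), hme⟩
        simp only [Finset.mem_union, Finset.mem_filter, Finset.mem_univ, true_and]
        exact Or.inl (Or.inl this)
  have hcards : n ≤ H.degree v + R.card + 1 := by
    have h1 := Finset.card_le_card hcover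
    have h2 := Finset.card_union_le ((Finset.univ.filter (fun w => H.Adj v w)) ∪ R) ({v} : Finset (Fin n))
    have h3 := Finset.card_union_le (Finset.univ.filter (fun w => H.Adj v w)) R
    rw [Finset.card_univ, Fintype.card_fin] at h1
    rw [SimpleGraph.degree, hNv]
    simp only [Finset.card_singleton] at h2
    omega
  obtain ⟨b, hb⟩ := hn2
  omega

/-- value-level pairing map for the `k`-th crossing matching -/
def gv (m k j : ℕ) : ℕ := if j < m then m + ((j + k) % m) else ((j - m) + (m - k)) % m

lemma gv_lt {m k j : ℕ} (hm : 0 < m) (hj : j < 2 * m) : gv m k j < 2 * m := by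
  unfold gv
  split
  · have := Nat.mod_lt (j + k) hm; omega
  · have := Nat.mod_lt ((j - m) + (m - k)) hm; omega

lemma gv_big {m k j : ℕ} (hj : j < m) : m ≤ gv m k j := by
  unfold gv; rw [if_pos hj]; omega

lemma gv_small {m k j : ℕ} (hm : 0 < m) (hj : ¬ j < m) : gv m k j < m := by
  unfold gv; rw [if_neg hj]; exact Nat.mod_lt _ hm

lemma gv_invol {m k j : ℕ} (hm : 0 < m) (hk : k ≤ m) (hj : j < 2 * m) :
    gv m k (gv m k j) = j := by
  by_cases hjm : j < m
  · have h1 : ¬ (m + ((j + k) % m) < m) := by omega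
    simp only [gv, if_pos hjm, if_neg h1]
    have h2 : m + (j + k) % m - m = (j + k) % m := by omega
    rw [h2, Nat.mod_add_mod]
    have h3 : j + k + (m - k) = j + m := by omega
    rw [h3, Nat.add_mod_right]
    exact Nat.mod_eq_of_lt hjm
  · have h1 : (j - m + (m - k)) % m < m := Nat.mod_lt _ hm
    simp only [gv, if_neg hjm, if_pos h1]
    rw [Nat.mod_add_mod]
    have h2 : j - m + (m - k) + k = (j - m) + m := by omega
    rw [h2, Nat.add_mod_right, Nat.mod_eq_of_lt (by omega : j - m < m)]
    omega

lemma gv_cancel {m k k' j : ℕ} (hk : k < m) (hk' : k' < m) (hj : j < m)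
    (h : gv m k j = gv m k' j) : k = k' := by
  simp only [gv, if_pos hj] at h
  have h1 : (j + k) % m = (j + k') % m := by omega
  have h2 : k ≡ k' [MOD m] := Nat.ModEq.add_left_cancel' j h1
  rwa [Nat.ModEq, Nat.mod_eq_of_lt hk, Nat.mod_eq_of_lt hk'] at h2

lemma ub_family {n : ℕ} (hn : n % 4 = 2) :
    ∃ 𝓜 : Finset (⊤ : SimpleGraph (Fin n)).Subgraph, 𝓜.card = n / 2 ∧
      (∀ M ∈ 𝓜, M.IsPerfectMatching) ∧
      ((𝓜 : Set (⊤ : SimpleGraph (Fin n)).Subgraph).Pairwise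
        fun M N => Disjoint M.edgeSet N.edgeSet) ∧
      ¬ ∃ M' : ((⊤ : SimpleGraph (Fin n)).deleteEdges
          (⋃ M ∈ 𝓜, SimpleGraph.Subgraph.edgeSet M)).Subgraph, M'.IsPerfectMatching := by
  classical
  set m := n / 2 with hmdef
  have hnm : n = 2 * m := by omega
  have hm : 0 < m := by omega
  have hmodd : m % 2 = 1 := by omega
  -- the pairing functions
  set G : ℕ → Fin n → Fin n := fun k a => ⟨gv m k a.val, by
    have h2 : (a : ℕ) < 2 * m := by omega
    have := gv_lt (k := k) hm h2; omega⟩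
    with hGdef
  have hGinv : ∀ k, k ≤ m → ∀ a : Fin n, G k (G k a) = a := by
    intro k hk a
    apply Fin.ext
    exact gv_invol hm hk (hnm ▸ a.2)
  have hGne : ∀ k (a : Fin n), G k a ≠ a := by
    intro k a h
    have hval : gv m k a.val = a.val := congrArg Fin.val h
    by_cases ha : a.val < m
    · have := gv_big (k := k) ha; omega
    · have := gv_small (k := k) hm ha; omega
  -- the matchings
  set Msub : ℕ → (⊤ : SimpleGraph (Fin n)).Subgraph := fun k =>
    { verts := Set.univ
      Adj := fun a b => G k a = b ∨ G k b = a
      adj_sub := by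
        rintro a b (rfl | rfl)
        · exact (SimpleGraph.top_adj _ _).2 (fun h => hGne k a h.symm)
        · exact (SimpleGraph.top_adj _ _).2 (fun h => hGne k b h)
      edge_vert := fun _ => Set.mem_univ _
      symm := ⟨fun a b h => h.symm⟩ } with hMdef
  have hMadj : ∀ k, k ≤ m → ∀ a b : Fin n, (Msub k).Adj a b → G k a = b := by
    intro k hk a b h
    rcases h with h | h
    · exact h
    · rw [← h, hGinv k hk]
  -- perfect matchings
  have hpm : ∀ k, k ≤ m → (Msub k).IsPerfectMatching := by
    intro k hk
    rw [SimpleGraph.Subgraph.isPerfectMatching_iff]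
    intro v
    exact ⟨G k v, Or.inl rfl, fun w hw => (hMadj k hk v w hw).symm⟩
  -- distinctness via edges
  have hMeq : ∀ k k', k < m → k' < m → ∀ a b : Fin n,
      (Msub k).Adj a b → (Msub k').Adj a b → k = k' := by
    intro k k' hk hk' a b h1 h2
    have hb1 : G k a = b := hMadj k hk.le a b h1
    have hb2 : G k' a = b := hMadj k' hk'.le a b h2
    by_cases ha : a.val < m
    · exact gv_cancel hk hk' ha (congrArg Fin.val (hb1.trans hb2.symm))
    · have ha1 : G k b = a := by rw [← hb1, hGinv k hk.le]
      have ha2 : G k' b = a := by rw [← hb2, hGinv k' hk'.le]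
      have hbv : b.val < m := by
        have := gv_small (k := k) (j := a.val) hm ha
        rw [← hb1]; exact this
      exact gv_cancel hk hk' hbv (congrArg Fin.val (ha1.trans ha2.symm))
  have hMinj : Set.InjOn (fun k : Fin m => Msub k.val) (Finset.univ : Finset (Fin m)) := by
    intro k _ k' _ h
    have h0 : (0 : ℕ) < n := by omega
    set z : Fin n := ⟨0, h0⟩ with hz
    have h' : Msub k.val = Msub k'.val := h
    have h1 : (Msub k.val).Adj z (G k.val z) := Or.inl rfl
    have h2 : (Msub k'.val).Adj z (G k.val z) := by rw [← h']; exact h1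
    exact Fin.ext (hMeq k.val k'.val k.2 k'.2 z (G k.val z) h1 h2)
  refine ⟨Finset.image (fun k : Fin m => Msub k.val) Finset.univ, ?_, ?_, ?_, ?_⟩
  · rw [Finset.card_image_of_injOn hMinj, Finset.card_univ, Fintype.card_fin]
  · intro M hM
    obtain ⟨k, _, rfl⟩ := Finset.mem_image.1 hM
    exact hpm k.val k.2.le
  · intro M hM N hN hMN
    rw [Finset.coe_image] at hM hN
    obtain ⟨k, _, rfl⟩ := hM
    obtain ⟨k', _, rfl⟩ := hN
    rw [Set.disjoint_left]
    intro e he1 he2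
    induction e with
    | h a b =>
      rw [SimpleGraph.Subgraph.mem_edgeSet] at he1 he2
      exact hMN (congrArg (fun j : ℕ => Msub j) (hMeq k.val k'.val k.2 k'.2 a b he1 he2))
  · -- no perfect matching remains
    intro hexmatch
    set E := ⋃ M ∈ Finset.image (fun k : Fin m => Msub k.val) Finset.univ,
      SimpleGraph.Subgraph.edgeSet M with hE
    obtain ⟨M', hM'⟩ := hexmatch
    -- every crossing edge is in E
    have hcross : ∀ a b : Fin n, a.val < m → ¬ b.val < m → s(a, b) ∈ E := by
      intro a b ha hb
      set k : ℕ := ((b.val - m) + (m - a.val)) % m with hk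
      have hklt : k < m := Nat.mod_lt _ hm
      have hGab : G k a = b := by
        apply Fin.ext
        show gv m k a.val = b.val
        have hbn : b.val < 2 * m := hnm ▸ b.2
        simp only [gv, if_pos ha, hk, Nat.add_mod_mod]
        have h3 : a.val + (b.val - m + (m - a.val)) = (b.val - m) + m := by omega
        rw [h3, Nat.add_mod_right, Nat.mod_eq_of_lt (by omega : b.val - m < m)]
        omega
      rw [hE]
      simp only [Set.mem_iUnion]
      exact ⟨Msub k, Finset.mem_image.2 ⟨⟨k, hklt⟩, Finset.mem_univ _, rfl⟩,
        SimpleGraph.Subgraph.mem_edgeSet.2 (Or.inl hGab)⟩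
    -- the deleted graph has no crossing edges
    have hside : ∀ a b : Fin n,
        ((⊤ : SimpleGraph (Fin n)).deleteEdges E).Adj a b → (a.val < m ↔ b.val < m) := by
      intro a b hab
      rw [SimpleGraph.deleteEdges_adj] at hab
      constructor
      · intro ha
        by_contra hb
        exact hab.2 (hcross a b ha hb)
      · intro hb
        by_contra ha
        exact hab.2 ((Sym2.eq_swap ▸ hcross b a hb ha))
    -- partner function of the perfect matching
    have hM'' := SimpleGraph.Subgraph.isPerfectMatching_iff.1 hM'
    have hM''' : ∀ v, ∃ w, M'.Adj v w ∧ ∀ y, M'.Adj v y → y = w := by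
      intro v
      obtain ⟨w, h1, h2⟩ := hM'' v
      exact ⟨w, h1, fun y hy => h2 y hy⟩
    choose p hpadj hpuniq' using hM'''
    have hpuniq : ∀ v w, M'.Adj v w → p v = w := fun v w h => (hpuniq' v w h).symm
    set S : Finset (Fin n) := Finset.univ.filter (fun a : Fin n => a.val < m) with hS
    have hSpair : ∀ x ∈ S, p x ∈ S ∧ p (p x) = x ∧ p x ≠ x := by
      intro x hx
      rw [hS, Finset.mem_filter] at hx
      have hadj := hpadj x
      have hH := M'.adj_sub hadj
      refine ⟨?_, ?_, ?_⟩
      · rw [hS, Finset.mem_filter]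
        exact ⟨Finset.mem_univ _, (hside x (p x) hH).1 hx.2⟩
      · exact hpuniq (p x) x hadj.symm
      · intro h
        have := M'.adj_sub hadj
        rw [h] at this
        rw [SimpleGraph.deleteEdges_adj, SimpleGraph.top_adj] at this
        exact this.1 rfl
    have hev : Even S.card := even_card_of_pairing S p hSpair
    have hScard : S.card = m := by
      have : S = Finset.image (fun i : Fin m => (⟨i.val, by omega⟩ : Fin n)) Finset.univ := by
        ext a
        simp only [hS, Finset.mem_filter, Finset.mem_univ, true_and, Finset.mem_image]
        constructor
        · intro ha
          exact ⟨⟨a.val, ha⟩, Fin.ext rfl⟩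
        · rintro ⟨i, -, rfl⟩
          exact i.2
      have hinj : Function.Injective (fun i : Fin m => (⟨i.val, by omega⟩ : Fin n)) := by
        intro i j hij
        rw [Fin.ext_iff] at hij ⊢
        exact hij
      rw [this, Finset.card_image_of_injective _ hinj, Finset.card_univ, Fintype.card_fin]
    rw [hScard] at hev
    obtain ⟨c, hc⟩ := hev
    omega

/-- The matching persistency of a graph `G`: the size of the smallest set of pairwise
edge-disjoint perfect matchings whose removal from `G` leaves a graph with no
perfect matching. -/
noncomputable def matchingPersistency {V : Type} (G : SimpleGraph V) : ℕ :=
  sInf {k : ℕ | ∃ 𝓜 : Finset G.Subgraph, 𝓜.card = k ∧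
    (∀ M ∈ 𝓜, M.IsPerfectMatching) ∧
    ((𝓜 : Set G.Subgraph).Pairwise fun M N => Disjoint M.edgeSet N.edgeSet) ∧
    ¬ ∃ M' : (G.deleteEdges (⋃ M ∈ 𝓜, SimpleGraph.Subgraph.edgeSet M)).Subgraph,
        M'.IsPerfectMatching}

/-- If `n ≡ 2 (mod 4)`, then the matching persistency of `K_n` equals `n/2`. -/
theorem mp_complete_eq_half (n : ℕ) (hn : n % 4 = 2) :
    matchingPersistency (⊤ : SimpleGraph (Fin n)) = n / 2 := by
  have hn2 : Even n := ⟨n / 2, by omega⟩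
  have hmem : n / 2 ∈ {k : ℕ | ∃ 𝓜 : Finset (⊤ : SimpleGraph (Fin n)).Subgraph,
      𝓜.card = k ∧ (∀ M ∈ 𝓜, M.IsPerfectMatching) ∧
      ((𝓜 : Set (⊤ : SimpleGraph (Fin n)).Subgraph).Pairwise
        fun M N => Disjoint M.edgeSet N.edgeSet) ∧
      ¬ ∃ M' : ((⊤ : SimpleGraph (Fin n)).deleteEdges
          (⋃ M ∈ 𝓜, SimpleGraph.Subgraph.edgeSet M)).Subgraph, M'.IsPerfectMatching} := by
    obtain ⟨𝓜, h1, h2, h3, h4⟩ := ub_family hn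
    exact ⟨𝓜, h1, h2, h3, h4⟩
  apply le_antisymm
  · exact Nat.sInf_le hmem
  · apply le_csInf ⟨_, hmem⟩
    rintro k ⟨𝓜, hcard, hpm, -, hno⟩
    by_contra hk
    push_neg at hk
    exact hno (lb_delete_pm hn2 𝓜 hpm (by omega))
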